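/- For every q ∈ [1/7, 1/6), the 2-periodic sequence a = (a_n) given by a_{2n−1} = (1−6q)/5 and a_{2n} = (2−7q)/(2+3q) for all n ∈ ℕ satisfies a_1 < 1/3 < a_2, and the set C(a) − C(a) is a Cantorval. -/

import Mathlib

open Pointwise MeasureTheory Set

namespace CCS

/-- `dSeq a n` is the common length `d_n = ∏_{i=1}^n (1 - a_i)/2` of the intervals of the
`n`-th step of the construction of the central Cantor set `C(a)` (`d_0 = 1`).
The sequence `a` is indexed from `1`; the value `a 0` is irrelevant. -/
noncomputable def dSeq (a : ℕ → ℝ) (n : ℕ) : ℝ :=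
  ∏ i ∈ Finset.Icc 1 n, ((1 - a i) / 2)

/-- Left endpoint of the interval `I_t`, `t ∈ {0,1}^n` (coded as a list, the paper's
`t_j` being `t.getD (j-1) 0`): `l(I_t) = ∑_{j=1}^n t_j (d_{j-1} - d_j)`. -/
noncomputable def Il (a : ℕ → ℝ) (t : List ℕ) : ℝ :=
  ∑ j ∈ Finset.range t.length, (t.getD j 0 : ℝ) * (dSeq a j - dSeq a (j + 1))

/-- The `n`-th step `C_n(a)` of the construction of the central Cantor set:
the union of the intervals `I_t = [l(I_t), l(I_t) + d_n]` over `t ∈ {0,1}^n`. -/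
noncomputable def cantorStep (a : ℕ → ℝ) (n : ℕ) : Set ℝ :=
  ⋃ t ∈ {t : List ℕ | t.length = n ∧ ∀ j ∈ t, j ≤ 1},
    Set.Icc (Il a t) (Il a t + dSeq a n)

/-- The central Cantor set `C(a) = ⋂ₙ C_n(a)`. -/
noncomputable def cantorSet (a : ℕ → ℝ) : Set ℝ := ⋂ n, cantorStep a n

/-- Left endpoint of the interval `J_s = I_t - I_p`, for `s ∈ {0,1,2}^n`:
`l(J_s) = -1 + ∑_{j=1}^n s_j (d_{j-1} - d_j)`. -/
noncomputable def Jl (a : ℕ → ℝ) (s : List ℕ) : ℝ :=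
  -1 + ∑ j ∈ Finset.range s.length, (s.getD j 0 : ℝ) * (dSeq a j - dSeq a (j + 1))

/-- Right endpoint of `J_s`: `r(J_s) = l(J_s) + 2 d_n`. -/
noncomputable def Jr (a : ℕ → ℝ) (s : List ℕ) : ℝ :=
  Jl a s + 2 * dSeq a s.length

/-- The interval `J_s`. -/
noncomputable def Jset (a : ℕ → ℝ) (s : List ℕ) : Set ℝ := Set.Icc (Jl a s) (Jr a s)

/-- Left endpoint of the gap `G^i_s` (`i = 0`: left gap, `i = 1`: right gap) of `J_s`. -/
noncomputable def Gl (a : ℕ → ℝ) (i : ℕ) (s : List ℕ) : ℝ :=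
  Jl a s + (i : ℝ) * (dSeq a s.length - dSeq a (s.length + 1)) + 2 * dSeq a (s.length + 1)

/-- Right endpoint of the gap `G^i_s`. -/
noncomputable def Gr (a : ℕ → ℝ) (i : ℕ) (s : List ℕ) : ℝ :=
  Jl a s + ((i : ℝ) + 1) * (dSeq a s.length - dSeq a (s.length + 1))

/-- The gap `G^i_s ⊆ J_s`, an open interval. -/
noncomputable def Gset (a : ℕ → ℝ) (i : ℕ) (s : List ℕ) : Set ℝ :=
  Set.Ioo (Gl a i s) (Gr a i s)

/-- `N(0,s) = max {j : s_j > 0}`, `N(1,s) = max {j : s_j < 2}` (1-based, `max ∅ = 0`). -/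
noncomputable def Nidx (i : ℕ) (s : List ℕ) : ℕ :=
  sSup {j | 1 ≤ j ∧ j ≤ s.length ∧
    (if i = 0 then 0 < s.getD (j - 1) 0 else s.getD (j - 1) 0 < 2)}

/-- The family `𝒢^{i0}_{s0}(n)` of (indices of) gaps of rank `n`, for
`s0 ∈ {0,1,2}^{k_m - 1}`; a gap `G^i_s` is coded by the pair `(i, s)`.
`𝒢^{i0}_{s0}(m) = {G^{i0}_{s0}}` and for `n > m`,
`𝒢^{i0}_{s0}(n)` consists of the gap `Ḡ^{i0}_{s0}(n)` together with the gaps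
`Ḡ^1_{t^j}(n)`, `Ḡ^0_{t^(j+1)}(n)` for all `G^j_t ∈ 𝒢^{i0}_{s0}(l)`, `m ≤ l < n`. -/
def gapFamily (k : ℕ → ℕ) (i0 : ℕ) (s0 : List ℕ) (m : ℕ) (n : ℕ) : Set (ℕ × List ℕ) :=
  if n ≤ m then {(i0, s0)}
  else
    {(i0, s0 ++ List.replicate (k n - k m) (2 * i0))} ∪
      ⋃ (l : ℕ) (_ : m ≤ l) (hl : l < n),
        ⋃ p ∈ gapFamily k i0 s0 m l,
          ({(1, p.2 ++ p.1 :: List.replicate (k n - k l - 1) 2),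
            (0, p.2 ++ (p.1 + 1) :: List.replicate (k n - k l - 1) 0)} : Set (ℕ × List ℕ))
termination_by n
decreasing_by exact hl

/-- The family `𝒢^{i0}_{s0} = ⋃_{n ≥ m} 𝒢^{i0}_{s0}(n)`. -/
def gapFamilyAll (k : ℕ → ℕ) (i0 : ℕ) (s0 : List ℕ) (m : ℕ) : Set (ℕ × List ℕ) :=
  ⋃ (n : ℕ) (_ : m ≤ n), gapFamily k i0 s0 m n

/-- The family `𝒢_t := 𝒢^0_{t ++ 0^{(k_m - |t| - 1)}} ∪ 𝒢^1_{t ++ 2^{(k_m - |t| - 1)}}`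
for `t ∈ {0,1,2}^k` with `k_{m-1} ≤ k < k_m`. -/
def gapFamilyT (k : ℕ → ℕ) (m : ℕ) (t : List ℕ) : Set (ℕ × List ℕ) :=
  gapFamilyAll k 0 (t ++ List.replicate (k m - t.length - 1) 0) m ∪
    gapFamilyAll k 1 (t ++ List.replicate (k m - t.length - 1) 2) m

/-- The union `⋃ 𝒢` of a family of (indices of) gaps, as a subset of `ℝ`. -/
noncomputable def gapUnion (a : ℕ → ℝ) (G : Set (ℕ × List ℕ)) : Set ℝ :=
  ⋃ p ∈ G, Gset a p.1 p.2

/-- `padSeq k c s m n` is the index of the gap `G^i(s,n)` (for `c = 2i`):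
`s ++ c^{(k_m - |s| - 1)} ++ 1 ++ c^{(k_{m+1} - k_m - 1)} ++ 1 ++ ⋯ ++ 1 ++ c^{(k_n - k_{n-1} - 1)}`. -/
def padSeq (k : ℕ → ℕ) (c : ℕ) (s : List ℕ) (m : ℕ) : ℕ → List ℕ
  | 0 => s ++ List.replicate (k m - s.length - 1) c
  | n + 1 =>
    if n + 1 ≤ m then s ++ List.replicate (k m - s.length - 1) c
    else padSeq k c s m n ++ 1 :: List.replicate (k (n + 1) - k n - 1) c

/-- `δ_n := min {3d_i - d_{i-1} : k_{n-1} + 1 ≤ i ≤ k_n - 1}` (as an element of `EReal`,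
so that `min ∅ = ⊤ = ∞`). -/
noncomputable def deltaMin (a : ℕ → ℝ) (k : ℕ → ℕ) (n : ℕ) : EReal :=
  sInf ((fun i => ((3 * dSeq a i - dSeq a (i - 1) : ℝ) : EReal)) ''
    (Set.Icc (k (n - 1) + 1) (k n - 1)))

/-- `Δ_n := max {3d_i - d_{i-1} : k_{n-1} + 1 ≤ i ≤ k_n - 1}` (`max ∅ = ⊥ = -∞`). -/
noncomputable def deltaMax (a : ℕ → ℝ) (k : ℕ → ℕ) (n : ℕ) : EReal :=
  sSup ((fun i => ((3 * dSeq a i - dSeq a (i - 1) : ℝ) : EReal)) ''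
    (Set.Icc (k (n - 1) + 1) (k n - 1)))

/-- `m_n := min { δ_n - (d_{k_n - 1} - d_{k_n}), 4 d_{k_n} - Δ_n }`. -/
noncomputable def mSeq (a : ℕ → ℝ) (k : ℕ → ℕ) (n : ℕ) : EReal :=
  min (deltaMin a k n - ((dSeq a (k n - 1) - dSeq a (k n) : ℝ) : EReal))
    (((4 * dSeq a (k n) : ℝ) : EReal) - deltaMax a k n)

/-- `∑_{i=n+1}^∞ (d_{k_i - 1} - d_{k_i})`. -/
noncomputable def tailSum (a : ℕ → ℝ) (k : ℕ → ℕ) (n : ℕ) : ℝ :=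
  ∑' i : ℕ, (dSeq a (k (n + 1 + i) - 1) - dSeq a (k (n + 1 + i)))

/-- Condition `(*)`: `m_n ≥ 2 ∑_{i=n+1}^∞ (d_{k_i - 1} - d_{k_i})` for every `n ∈ ℕ`. -/
def condStar (a : ℕ → ℝ) (k : ℕ → ℕ) : Prop :=
  ∀ n : ℕ, 1 ≤ n → ((2 * tailSum a k n : ℝ) : EReal) ≤ mSeq a k n

/-- `(k_n)_{n ≥ 1}` is the increasing enumeration of all indices greater than `k 0 = k₀`
at which `a` exceeds `1/3`. -/
def IsGapEnum (a : ℕ → ℝ) (k : ℕ → ℕ) : Prop :=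
  StrictMono k ∧ (∀ n, 1 ≤ n → k 0 < k n ∧ 1 / 3 < a (k n)) ∧
    (∀ j, k 0 < j → 1 / 3 < a j → ∃ n, 1 ≤ n ∧ k n = j)

/-- `G` is a gap of `E`: a bounded connected component of `ℝ ∖ E`. -/
def IsGapOf (E G : Set ℝ) : Prop :=
  (∃ x ∉ E, G = connectedComponentIn Eᶜ x) ∧ Bornology.IsBounded G

/-- `C` is a proper (nontrivial) connected component of `E`. -/
def IsProperComponentOf (E C : Set ℝ) : Prop :=
  (∃ x ∈ E, C = connectedComponentIn E x) ∧ C.Nontrivial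

/-- `E` is a Cantorval: a perfect set with infinitely many gaps such that both endpoints
of every gap are accumulated both by gaps and by proper components of `E`. -/
def IsCantorval (E : Set ℝ) : Prop :=
  Perfect E ∧ {G : Set ℝ | IsGapOf E G}.Infinite ∧
    ∀ G, IsGapOf E G → ∀ p, p = sInf G ∨ p = sSup G →
      (∀ ε > 0, ∃ G', IsGapOf E G' ∧ G' ≠ G ∧ G' ⊆ Set.Ioo (p - ε) (p + ε)) ∧
      (∀ ε > 0, ∃ C, IsProperComponentOf E C ∧ C ⊆ Set.Ioo (p - ε) (p + ε))

/-- `J_s` and `J_u` (of length `k_m - 1`) are associated: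
`N := N(0,s) = N(1,u) ∈ {k_{m-1}+1, …, k_m - 1}`, `s|(N-1) = u|(N-1)`, `u_N = s_N - 1`.
Then `J_u` is the interval covering `𝒢^0_s` and `J_s` is the interval covering `𝒢^1_u`. -/
def Associated (k : ℕ → ℕ) (m : ℕ) (s u : List ℕ) : Prop :=
  s.length = k m - 1 ∧ u.length = k m - 1 ∧
    Nidx 0 s = Nidx 1 u ∧
    k (m - 1) + 1 ≤ Nidx 0 s ∧ Nidx 0 s ≤ k m - 1 ∧
    s.take (Nidx 0 s - 1) = u.take (Nidx 0 s - 1) ∧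
    u.getD (Nidx 0 s - 1) 0 = s.getD (Nidx 0 s - 1) 0 - 1

/-- `G^i_g ⊂_* J_v`: the gap `G^i_g` is covered by the interval `J_v`, i.e. `G^i_g`
belongs to a family `𝒢^0_w` (resp. `𝒢^1_w`) such that `J_v` is the interval covering it. -/
def CoversGap (k : ℕ → ℕ) (i : ℕ) (g : List ℕ) (v : List ℕ) : Prop :=
  ∃ m w, 1 ≤ m ∧
    ((Associated k m w v ∧ (i, g) ∈ gapFamilyAll k 0 w m) ∨
      (Associated k m v w ∧ (i, g) ∈ gapFamilyAll k 1 w m))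

/-- The achievement set `E(x) = {∑_{j ∈ A} x_j : A ⊆ ℕ}` of a series (indexed from `1`). -/
def achievementSet (x : ℕ → ℝ) : Set ℝ :=
  {y | ∃ A : Set ℕ, A ⊆ {n | 1 ≤ n} ∧ HasSum (A.indicator x) y}


/-! ### Auxiliary development -/

/-- the concrete sequence -/
noncomputable def aa (q : ℝ) : ℕ → ℝ :=
  fun n => if n % 2 = 1 then (1 - 6 * q) / 5 else (2 - 7 * q) / (2 + 3 * q)

variable {q : ℝ}

lemma aa_period (n : ℕ) : aa q (n + 2) = aa q n := by
  simp [aa, Nat.add_mod]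

lemma aa_odd {n : ℕ} (h : n % 2 = 1) : aa q n = (1 - 6 * q) / 5 := by simp [aa, h]

lemma aa_even {n : ℕ} (h : n % 2 = 0) : aa q n = (2 - 7 * q) / (2 + 3 * q) := by
  simp [aa, h]

lemma aa_mem (hq1 : 1 / 7 ≤ q) (hq2 : q < 1 / 6) (n : ℕ) :
    0 < aa q n ∧ aa q n < 1 := by
  rcases Nat.mod_two_eq_zero_or_one n with h | h
  · rw [aa_even h]
    constructor
    · apply div_pos <;> nlinarith
    · rw [div_lt_one (by nlinarith)]; nlinarith
  · rw [aa_odd h]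
    constructor
    · apply div_pos <;> nlinarith
    · nlinarith

lemma dSeq_zero (a : ℕ → ℝ) : dSeq a 0 = 1 := by
  simp [dSeq]

lemma dSeq_succ (a : ℕ → ℝ) (n : ℕ) :
    dSeq a (n + 1) = dSeq a n * ((1 - a (n + 1)) / 2) := by
  rw [dSeq, dSeq, Finset.prod_Icc_succ_top (by omega)]

lemma dSeq_one (hq1 : 1 / 7 ≤ q) : dSeq (aa q) 1 = (2 + 3 * q) / 5 := by
  rw [dSeq_succ, dSeq_zero, aa_odd (by norm_num)]
  ring

lemma dSeq_two (hq1 : 1 / 7 ≤ q) : dSeq (aa q) 2 = q := by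
  rw [dSeq_succ, dSeq_one hq1, aa_even (by norm_num)]
  have h : (2 : ℝ) + 3 * q ≠ 0 := by nlinarith
  field_simp
  ring

lemma dSeq_pos (hq1 : 1 / 7 ≤ q) (hq2 : q < 1 / 6) (n : ℕ) : 0 < dSeq (aa q) n := by
  induction n with
  | zero => rw [dSeq_zero]; norm_num
  | succ n ih =>
    rw [dSeq_succ]
    have := aa_mem hq1 hq2 (n + 1)
    nlinarith [ih]

lemma dSeq_lt (hq1 : 1 / 7 ≤ q) (hq2 : q < 1 / 6) (n : ℕ) :
    dSeq (aa q) (n + 1) < dSeq (aa q) n := by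
  rw [dSeq_succ]
  have h1 := aa_mem hq1 hq2 (n + 1)
  have h2 := dSeq_pos hq1 hq2 n
  nlinarith

lemma dSeq_shift (hq1 : 1 / 7 ≤ q) (hq2 : q < 1 / 6) :
    ∀ n, dSeq (aa q) (n + 2) = q * dSeq (aa q) n := by
  intro n
  induction n with
  | zero => rw [dSeq_two hq1, dSeq_zero]; ring
  | succ n ih =>
    rw [show n + 1 + 2 = (n + 2) + 1 by ring, dSeq_succ, ih, dSeq_succ,
      show n + 2 + 1 = (n + 1) + 2 by ring, aa_period]
    ring

lemma Il_nil (a : ℕ → ℝ) : Il a [] = 0 := by simp [Il]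

lemma Il_concat (a : ℕ → ℝ) (t : List ℕ) (b : ℕ) :
    Il a (t ++ [b]) = Il a t + (b : ℝ) * (dSeq a t.length - dSeq a (t.length + 1)) := by
  rw [Il, Il]
  have hl : (t ++ [b]).length = t.length + 1 := by simp
  rw [hl, Finset.sum_range_succ]
  congr 1
  · apply Finset.sum_congr rfl
    intro j hj
    rw [List.getD_append _ _ _ j (Finset.mem_range.mp hj)]
  · rw [List.getD_append_right _ _ _ _ (le_refl _)]
    simp

lemma Il_cons_cons (a : ℕ → ℝ) (b1 b2 : ℕ) (s : List ℕ) :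
    Il a (b1 :: b2 :: s) = (b1 : ℝ) * (dSeq a 0 - dSeq a 1)
      + (b2 : ℝ) * (dSeq a 1 - dSeq a 2)
      + ∑ j ∈ Finset.range s.length, (s.getD j 0 : ℝ) * (dSeq a (j + 2) - dSeq a (j + 3)) := by
  rw [Il]
  have hl : (b1 :: b2 :: s).length = 2 + s.length := by simp; omega
  rw [hl, Finset.sum_range_add]
  congr 1
  · simp [Finset.sum_range_succ]
  · apply Finset.sum_congr rfl
    intro j _
    have h1 : (2 : ℕ) + j = (j + 1) + 1 := by omega
    rw [h1, List.getD_cons_succ, List.getD_cons_succ]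

lemma mem_cantorStep_iff (a : ℕ → ℝ) {n : ℕ} {x : ℝ} :
    x ∈ cantorStep a n ↔ ∃ t : List ℕ, (t.length = n ∧ ∀ j ∈ t, j ≤ 1) ∧
      x ∈ Set.Icc (Il a t) (Il a t + dSeq a n) := by
  simp only [cantorStep, Set.mem_iUnion, Set.mem_setOf_eq, Set.mem_Icc, exists_prop]

lemma cantorStep_zero (a : ℕ → ℝ) : cantorStep a 0 = Set.Icc 0 1 := by
  ext x
  rw [mem_cantorStep_iff]
  constructor
  · rintro ⟨t, ⟨hlen, -⟩, hx⟩
    rw [List.length_eq_zero_iff.mp hlen] at hx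
    simpa [Il_nil, dSeq] using hx
  · intro hx
    exact ⟨[], ⟨rfl, by simp⟩, by simpa [Il_nil, dSeq] using hx⟩

lemma cantorStep_closed (a : ℕ → ℝ) (n : ℕ) : IsClosed (cantorStep a n) := by
  have hfin : {t : List ℕ | t.length = n ∧ ∀ j ∈ t, j ≤ 1}.Finite := by
    apply Set.Finite.subset (Set.Finite.image
      (fun l : List Bool => l.map (fun b => if b then 1 else 0))
      (List.finite_length_eq Bool n))
    rintro t ⟨hlen, hval⟩
    refine ⟨t.map (fun k => decide (k = 1)), by simp [hlen], ?_⟩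
    simp only []
    rw [List.map_map]
    conv_rhs => rw [← List.map_id t]
    apply List.map_congr_left
    intro j hj
    have := hval j hj
    interval_cases j <;> simp
  exact hfin.isClosed_biUnion (fun t _ => isClosed_Icc)

lemma cantorStep_mono (hq1 : 1 / 7 ≤ q) (hq2 : q < 1 / 6) (n : ℕ) :
    cantorStep (aa q) (n + 1) ⊆ cantorStep (aa q) n := by
  intro x hx
  rw [mem_cantorStep_iff] at hx ⊢
  obtain ⟨s, ⟨hlen, hval⟩, hx⟩ := hx
  have hne : s ≠ [] := by intro h; rw [h] at hlen; simp at hlen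
  have hs : s.dropLast ++ [s.getLast hne] = s := List.dropLast_append_getLast hne
  set t := s.dropLast with ht
  set b := s.getLast hne with hb
  have hlt : t.length = n := by
    have : t.length + 1 = n + 1 := by
      rw [← hlen, ← hs]; simp
    omega
  have hbv : b ≤ 1 := hval b (by rw [← hs]; simp)
  have hIl : Il (aa q) s = Il (aa q) t + (b : ℝ) * (dSeq (aa q) n - dSeq (aa q) (n + 1)) := by
    rw [← hs, Il_concat, hlt]
  refine ⟨t, ⟨hlt, fun j hj => hval j (by rw [← hs]; exact List.mem_append_left _ hj)⟩, ?_⟩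
  rw [Set.mem_Icc] at hx ⊢
  have h1 := dSeq_lt hq1 hq2 n
  have h2 := dSeq_pos hq1 hq2 (n + 1)
  interval_cases b <;> push_cast at hIl <;> constructor <;> nlinarith [hx.1, hx.2]

lemma zero_mem_cantorSet (hq1 : 1 / 7 ≤ q) (hq2 : q < 1 / 6) : (0 : ℝ) ∈ cantorSet (aa q) := by
  rw [cantorSet, Set.mem_iInter]
  intro n
  rw [mem_cantorStep_iff]
  refine ⟨List.replicate n 0, ⟨by simp, by simp⟩, ?_⟩
  have hIl : Il (aa q) (List.replicate n 0) = 0 := by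
    rw [Il]
    apply Finset.sum_eq_zero
    intro j hj
    rcases Nat.lt_or_ge j n with h | h
    · simp [List.getD_eq_getElem?_getD, List.getElem?_replicate, h]
    · rw [List.getD_eq_default]
      · norm_num
      · simpa using h
  rw [hIl, Set.mem_Icc]
  exact ⟨le_refl _, by linarith [dSeq_pos hq1 hq2 n]⟩

lemma one_mem_cantorSet (hq1 : 1 / 7 ≤ q) (hq2 : q < 1 / 6) : (1 : ℝ) ∈ cantorSet (aa q) := by
  rw [cantorSet, Set.mem_iInter]
  intro n
  rw [mem_cantorStep_iff]
  refine ⟨List.replicate n 1, ⟨by simp, by simp⟩, ?_⟩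
  have hIl : Il (aa q) (List.replicate n 1) = 1 - dSeq (aa q) n := by
    rw [Il]
    have : ∀ j ∈ Finset.range ((List.replicate n 1).length),
        ((List.replicate n (1:ℕ)).getD j 0 : ℝ) * (dSeq (aa q) j - dSeq (aa q) (j + 1))
          = dSeq (aa q) j - dSeq (aa q) (j + 1) := by
      intro j hj
      rw [Finset.mem_range] at hj
      simp only [List.length_replicate] at hj
      simp [List.getD_eq_getElem?_getD, List.getElem?_replicate, hj]
    rw [Finset.sum_congr rfl this]
    simp only [List.length_replicate]
    rw [Finset.sum_range_sub' (fun i => dSeq (aa q) i), dSeq_zero]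
  rw [hIl, Set.mem_Icc]
  constructor <;> linarith [dSeq_pos hq1 hq2 n]

/-- digit set of `C` -/
def Cdig (c : ℝ) : Prop := c = 0 ∨ c = 2 ∨ c = 3 ∨ c = 5

lemma Il_two (hq1 : 1 / 7 ≤ q) (hq2 : q < 1 / 6) (b1 b2 : ℕ) (s : List ℕ) :
    Il (aa q) (b1 :: b2 :: s) =
      (1 - q) / 5 * (3 * b1 + 2 * b2) + q * Il (aa q) s := by
  rw [Il_cons_cons, dSeq_zero, dSeq_one hq1, dSeq_two hq1]
  have hsum : ∑ j ∈ Finset.range s.length,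
      ((s.getD j 0 : ℝ)) * (dSeq (aa q) (j + 2) - dSeq (aa q) (j + 3)) = q * Il (aa q) s := by
    rw [Il, Finset.mul_sum]
    apply Finset.sum_congr rfl
    intro j _
    rw [show j + 3 = (j + 1) + 2 by ring, dSeq_shift hq1 hq2, dSeq_shift hq1 hq2]
    ring
  rw [hsum]
  ring

lemma cantorStep_subset_Icc (hq1 : 1 / 7 ≤ q) (hq2 : q < 1 / 6) (n : ℕ) :
    cantorStep (aa q) n ⊆ Set.Icc 0 1 := by
  induction n with
  | zero => rw [cantorStep_zero]
  | succ n ih => exact fun x hx => ih (cantorStep_mono hq1 hq2 n hx)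

lemma mem_cantorStep_two_iff (hq1 : 1 / 7 ≤ q) (hq2 : q < 1 / 6) {n : ℕ} {x : ℝ} :
    x ∈ cantorStep (aa q) (n + 2) ↔ ∃ c y, Cdig c ∧ y ∈ cantorStep (aa q) n ∧
      x = (1 - q) / 5 * c + q * y := by
  have hq0 : (0 : ℝ) < q := by linarith
  constructor
  · rw [mem_cantorStep_iff]
    rintro ⟨s, ⟨hlen, hval⟩, hx⟩
    match s, hlen with
    | b1 :: b2 :: s', hlen =>
    have hb1 : b1 ≤ 1 := hval b1 (by simp)
    have hb2 : b2 ≤ 1 := hval b2 (by simp)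
    have hlen' : s'.length = n := by simpa using hlen
    have hIl := Il_two hq1 hq2 b1 b2 s'
    have hd := dSeq_shift hq1 hq2 n
    refine ⟨3 * b1 + 2 * b2, (x - (1 - q) / 5 * (3 * b1 + 2 * b2)) / q, ?_, ?_,
      by field_simp; ring⟩
    · interval_cases b1 <;> interval_cases b2 <;> simp [Cdig] <;> norm_num
    · rw [mem_cantorStep_iff]
      refine ⟨s', ⟨hlen', fun j hj => hval j (by simp [hj])⟩, ?_⟩
      rw [Set.mem_Icc] at hx ⊢
      rw [hIl] at hx
      rw [hd] at hx
      constructor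
      · rw [le_div_iff₀ hq0]; nlinarith [hx.1]
      · rw [div_le_iff₀ hq0]; nlinarith [hx.2]
  · rintro ⟨c, y, hc, hy, rfl⟩
    rw [mem_cantorStep_iff] at hy ⊢
    obtain ⟨s', ⟨hlen', hval'⟩, hy⟩ := hy
    obtain ⟨b1, b2, hb1, hb2, hcb⟩ : ∃ b1 b2 : ℕ, b1 ≤ 1 ∧ b2 ≤ 1 ∧ c = 3 * b1 + 2 * b2 := by
      rcases hc with rfl | rfl | rfl | rfl
      · exact ⟨0, 0, by norm_num, by norm_num, by norm_num⟩
      · exact ⟨0, 1, by norm_num, by norm_num, by norm_num⟩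
      · exact ⟨1, 0, by norm_num, by norm_num, by norm_num⟩
      · exact ⟨1, 1, by norm_num, by norm_num, by norm_num⟩
    refine ⟨b1 :: b2 :: s', ⟨by simpa using hlen', ?_⟩, ?_⟩
    · intro j hj
      simp only [List.mem_cons] at hj
      rcases hj with rfl | rfl | h
      exacts [hb1, hb2, hval' j h]
    · rw [Set.mem_Icc] at hy
      rw [Set.mem_Icc, Il_two hq1 hq2, dSeq_shift hq1 hq2, hcb]
      constructor
      · nlinarith [hy.1]
      · nlinarith [hy.2]

lemma digit_unique (hq1 : 1 / 7 ≤ q) (hq2 : q < 1 / 6) {c c' y y' : ℝ}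
    (hc : Cdig c) (hc' : Cdig c') (hy : y ∈ Set.Icc (0:ℝ) 1) (hy' : y' ∈ Set.Icc (0:ℝ) 1)
    (he : (1 - q) / 5 * c + q * y = (1 - q) / 5 * c' + q * y') : c = c' := by
  rw [Set.mem_Icc] at hy hy'
  by_contra hne
  have h1 : |c - c'| ≥ 1 := by
    rcases hc with rfl | rfl | rfl | rfl <;> rcases hc' with rfl | rfl | rfl | rfl <;>
      simp_all <;> rw [abs_sub_comm] <;> norm_num
  have he2 : (1 - q) / 5 * (c - c') = q * (y' - y) := by linarith
  have h2 : (1 - q) / 5 * |c - c'| = q * |y' - y| := by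
    have h := congrArg abs he2
    rwa [abs_mul, abs_mul, abs_of_pos (show (0:ℝ) < (1-q)/5 by linarith),
      abs_of_pos (show (0:ℝ) < q by linarith)] at h
  have h3 : q * |y' - y| ≤ q := by
    have : |y' - y| ≤ 1 := by rw [abs_le]; constructor <;> linarith
    nlinarith
  nlinarith [abs_nonneg (y' - y)]

lemma mem_cantorSet_iff (hq1 : 1 / 7 ≤ q) (hq2 : q < 1 / 6) {x : ℝ} :
    x ∈ cantorSet (aa q) ↔ ∃ c y, Cdig c ∧ y ∈ cantorSet (aa q) ∧
      x = (1 - q) / 5 * c + q * y := by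
  have hq0 : (0:ℝ) < q := by linarith
  constructor
  · intro hx
    rw [cantorSet, Set.mem_iInter] at hx
    have key : ∀ n : ℕ, ∃ c y, Cdig c ∧ y ∈ cantorStep (aa q) n ∧
        x = (1 - q) / 5 * c + q * y := fun n =>
      (mem_cantorStep_two_iff hq1 hq2).mp (hx (n + 2))
    obtain ⟨c, y0, hc, hy0, hxe⟩ := key 0
    refine ⟨c, (x - (1 - q) / 5 * c) / q, hc, ?_, by field_simp; ring⟩
    rw [cantorSet, Set.mem_iInter]
    intro n
    obtain ⟨c', y', hc', hy', hxe'⟩ := key n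
    have hcc : c' = c := by
      apply digit_unique hq1 hq2 hc' hc
        (cantorStep_subset_Icc hq1 hq2 n hy')
        (cantorStep_subset_Icc hq1 hq2 0 hy0)
      rw [← hxe', ← hxe]
    have : (x - (1 - q) / 5 * c) / q = y' := by
      rw [hxe', hcc]; field_simp; ring
    rw [this]
    exact hy'
  · rintro ⟨c, y, hc, hy, rfl⟩
    rw [cantorSet, Set.mem_iInter] at hy ⊢
    intro n
    have h2 : ∀ m, (1 - q) / 5 * c + q * y ∈ cantorStep (aa q) (m + 2) := fun m =>
      (mem_cantorStep_two_iff hq1 hq2).mpr ⟨c, y, hc, hy m, rfl⟩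
    exact cantorStep_mono hq1 hq2 n (cantorStep_mono hq1 hq2 (n+1) (h2 n))


lemma cantorSet_closed : IsClosed (cantorSet (aa q)) :=
  isClosed_iInter (fun n => cantorStep_closed _ n)

lemma cantorSet_subset01 (hq1 : 1 / 7 ≤ q) (hq2 : q < 1 / 6) :
    cantorSet (aa q) ⊆ Set.Icc 0 1 :=
  fun x hx => cantorStep_subset_Icc hq1 hq2 0 (Set.mem_iInter.mp hx 0)

noncomputable def CC (q : ℝ) : Set ℝ := cantorSet (aa q) - cantorSet (aa q)

/-- digit set of `C - C` -/
def Ddig (e : ℝ) : Prop :=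
  e = 0 ∨ e = 1 ∨ e = -1 ∨ e = 2 ∨ e = -2 ∨ e = 3 ∨ e = -3 ∨ e = 5 ∨ e = -5

lemma mem_CC_iff {x : ℝ} : x ∈ CC q ↔ ∃ u ∈ cantorSet (aa q), ∃ v ∈ cantorSet (aa q), u - v = x :=
  Set.mem_sub

lemma CC_closed (hq1 : 1 / 7 ≤ q) (hq2 : q < 1 / 6) : IsClosed (CC q) := by
  have hcpt : IsCompact (cantorSet (aa q)) :=
    isCompact_Icc.of_isClosed_subset (cantorSet_closed) (cantorSet_subset01 hq1 hq2)
  have h : CC q = (fun p : ℝ × ℝ => p.1 - p.2) '' (cantorSet (aa q) ×ˢ cantorSet (aa q)) := by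
    ext x
    simp only [CC, Set.mem_sub, Set.mem_image, Set.mem_prod, Prod.exists]
    constructor
    · rintro ⟨u, hu, v, hv, rfl⟩; exact ⟨u, v, ⟨hu, hv⟩, rfl⟩
    · rintro ⟨u, v, ⟨hu, hv⟩, rfl⟩; exact ⟨u, hu, v, hv, rfl⟩
  rw [h]
  exact ((hcpt.prod hcpt).image (continuous_fst.sub continuous_snd)).isClosed

lemma CC_subset (hq1 : 1 / 7 ≤ q) (hq2 : q < 1 / 6) : CC q ⊆ Set.Icc (-1) 1 := by
  rintro x hx
  obtain ⟨u, hu, v, hv, rfl⟩ := mem_CC_iff.mp hx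
  have h1 := cantorSet_subset01 hq1 hq2 hu
  have h2 := cantorSet_subset01 hq1 hq2 hv
  rw [Set.mem_Icc] at *
  constructor <;> [linarith [h1.1, h2.2]; linarith [h1.2, h2.1]]

lemma neg_mem_CC {x : ℝ} (hx : x ∈ CC q) : -x ∈ CC q := by
  obtain ⟨u, hu, v, hv, rfl⟩ := mem_CC_iff.mp hx
  exact mem_CC_iff.mpr ⟨v, hv, u, hu, by ring⟩

lemma one_mem_CC (hq1 : 1 / 7 ≤ q) (hq2 : q < 1 / 6) : (1:ℝ) ∈ CC q :=
  mem_CC_iff.mpr ⟨1, one_mem_cantorSet hq1 hq2, 0, zero_mem_cantorSet hq1 hq2, by ring⟩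

lemma neg_one_mem_CC (hq1 : 1 / 7 ≤ q) (hq2 : q < 1 / 6) : (-1:ℝ) ∈ CC q :=
  neg_mem_CC (one_mem_CC hq1 hq2)

lemma CC_nonempty (hq1 : 1 / 7 ≤ q) (hq2 : q < 1 / 6) : (CC q).Nonempty :=
  ⟨1, one_mem_CC hq1 hq2⟩

lemma Ddig_of_Cdig {c c' : ℝ} (hc : Cdig c) (hc' : Cdig c') : Ddig (c - c') := by
  rcases hc with rfl | rfl | rfl | rfl <;> rcases hc' with rfl | rfl | rfl | rfl <;>
    simp [Ddig] <;> norm_num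

lemma Cdig_of_Ddig {e : ℝ} (he : Ddig e) : ∃ c c', Cdig c ∧ Cdig c' ∧ e = c - c' := by
  rcases he with rfl | rfl | rfl | rfl | rfl | rfl | rfl | rfl | rfl
  · exact ⟨0, 0, Or.inl rfl, Or.inl rfl, by ring⟩
  · exact ⟨3, 2, by simp [Cdig], by simp [Cdig], by ring⟩
  · exact ⟨2, 3, by simp [Cdig], by simp [Cdig], by ring⟩
  · exact ⟨2, 0, by simp [Cdig], by simp [Cdig], by ring⟩
  · exact ⟨0, 2, by simp [Cdig], by simp [Cdig], by ring⟩
  · exact ⟨3, 0, by simp [Cdig], by simp [Cdig], by ring⟩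
  · exact ⟨0, 3, by simp [Cdig], by simp [Cdig], by ring⟩
  · exact ⟨5, 0, by simp [Cdig], by simp [Cdig], by ring⟩
  · exact ⟨0, 5, by simp [Cdig], by simp [Cdig], by ring⟩

lemma CC_decomp (hq1 : 1 / 7 ≤ q) (hq2 : q < 1 / 6) {x : ℝ} (hx : x ∈ CC q) :
    ∃ e y, Ddig e ∧ y ∈ CC q ∧ x = (1 - q) / 5 * e + q * y := by
  obtain ⟨u, hu, v, hv, rfl⟩ := mem_CC_iff.mp hx
  obtain ⟨c, u', hc, hu', rfl⟩ := (mem_cantorSet_iff hq1 hq2).mp hu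
  obtain ⟨c', v', hc', hv', rfl⟩ := (mem_cantorSet_iff hq1 hq2).mp hv
  exact ⟨c - c', u' - v', Ddig_of_Cdig hc hc',
    mem_CC_iff.mpr ⟨u', hu', v', hv', rfl⟩, by ring⟩

lemma CC_map (hq1 : 1 / 7 ≤ q) (hq2 : q < 1 / 6) {e y : ℝ} (he : Ddig e) (hy : y ∈ CC q) :
    (1 - q) / 5 * e + q * y ∈ CC q := by
  obtain ⟨u, hu, v, hv, rfl⟩ := mem_CC_iff.mp hy
  obtain ⟨c, c', hc, hc', rfl⟩ := Cdig_of_Ddig he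
  refine mem_CC_iff.mpr ⟨(1 - q) / 5 * c + q * u, ?_, (1 - q) / 5 * c' + q * v, ?_, by ring⟩
  · exact (mem_cantorSet_iff hq1 hq2).mpr ⟨c, u, hc, hu, rfl⟩
  · exact (mem_cantorSet_iff hq1 hq2).mpr ⟨c', v, hc', hv, rfl⟩

/-- digit selection for points of the middle interval -/
lemma digit_select (hq1 : 1 / 7 ≤ q) (hq2 : q < 1 / 6) {x : ℝ}
    (hx : x ∈ Set.Icc (-3/5 : ℝ) (3/5)) :
    ∃ e x', Ddig e ∧ x' ∈ Set.Icc (-3/5 : ℝ) (3/5) ∧ x = (1 - q) / 5 * e + q * x' := by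
  rw [Set.mem_Icc] at hx
  have hq0 : (0:ℝ) < q := by linarith
  obtain ⟨e, he, h1, h2⟩ : ∃ e : ℝ, Ddig e ∧
      (1 - q)/5 * e - 3*q/5 ≤ x ∧ x ≤ (1 - q)/5 * e + 3*q/5 := by
    rcases le_or_gt x (-3*((1-q)/5) + 3*q/5) with h | h
    · exact ⟨-3, by simp [Ddig], by nlinarith [hx.1], by nlinarith⟩
    rcases le_or_gt x (-2*((1-q)/5) + 3*q/5) with h2 | h2
    · exact ⟨-2, by simp [Ddig], by nlinarith, by nlinarith⟩
    rcases le_or_gt x (-1*((1-q)/5) + 3*q/5) with h3 | h3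
    · exact ⟨-1, by simp [Ddig], by nlinarith, by nlinarith⟩
    rcases le_or_gt x (3*q/5) with h4 | h4
    · exact ⟨0, by simp [Ddig], by nlinarith, by nlinarith⟩
    rcases le_or_gt x ((1-q)/5 + 3*q/5) with h5 | h5
    · exact ⟨1, by simp [Ddig], by nlinarith, by nlinarith⟩
    rcases le_or_gt x (2*((1-q)/5) + 3*q/5) with h6 | h6
    · exact ⟨2, by simp [Ddig], by nlinarith, by nlinarith⟩
    · exact ⟨3, by simp [Ddig], by nlinarith, by nlinarith [hx.2]⟩
  refine ⟨e, (x - (1 - q)/5 * e) / q, he, ?_, by field_simp; ring⟩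
  rw [Set.mem_Icc, le_div_iff₀ hq0, div_le_iff₀ hq0]
  constructor <;> nlinarith

lemma infDist_CC_bound (hq1 : 1 / 7 ≤ q) (hq2 : q < 1 / 6) :
    ∀ n : ℕ, ∀ x ∈ Set.Icc (-3/5 : ℝ) (3/5), Metric.infDist x (CC q) ≤ 2 * q ^ n := by
  have hq0 : (0:ℝ) < q := by linarith
  intro n
  induction n with
  | zero =>
    intro x hx
    rw [Set.mem_Icc] at hx
    calc Metric.infDist x (CC q) ≤ dist x 1 :=
          Metric.infDist_le_dist_of_mem (one_mem_CC hq1 hq2)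
    _ ≤ 2 * q ^ 0 := by
          rw [Real.dist_eq, abs_le]
          constructor <;> simp <;> linarith
  | succ n ih =>
    intro x hx
    obtain ⟨e, x', he, hx', rfl⟩ := digit_select hq1 hq2 hx
    have hcpt : IsCompact (CC q) := by
      have hcpt : IsCompact (cantorSet (aa q)) :=
        isCompact_Icc.of_isClosed_subset (cantorSet_closed) (cantorSet_subset01 hq1 hq2)
      have h : CC q = (fun p : ℝ × ℝ => p.1 - p.2) '' (cantorSet (aa q) ×ˢ cantorSet (aa q)) := by
        ext x
        simp only [CC, Set.mem_sub, Set.mem_image, Set.mem_prod, Prod.exists]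
        constructor
        · rintro ⟨u, hu, v, hv, rfl⟩; exact ⟨u, v, ⟨hu, hv⟩, rfl⟩
        · rintro ⟨u, v, ⟨hu, hv⟩, rfl⟩; exact ⟨u, hu, v, hv, rfl⟩
      rw [h]
      exact (hcpt.prod hcpt).image (continuous_fst.sub continuous_snd)
    obtain ⟨y, hy, hdy⟩ := hcpt.exists_infDist_eq_dist (CC_nonempty hq1 hq2) x'
    calc Metric.infDist ((1 - q) / 5 * e + q * x') (CC q)
        ≤ dist ((1 - q) / 5 * e + q * x') ((1 - q) / 5 * e + q * y) :=
          Metric.infDist_le_dist_of_mem (CC_map hq1 hq2 he hy)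
    _ = q * dist x' y := by
          rw [Real.dist_eq, Real.dist_eq,
            show (1 - q) / 5 * e + q * x' - ((1 - q) / 5 * e + q * y) = q * (x' - y) by ring,
            abs_mul, abs_of_pos hq0]
    _ ≤ q * (2 * q ^ n) := by
          have := ih x' hx'
          rw [← hdy]
          nlinarith [Metric.infDist_nonneg (x := x') (s := CC q)]
    _ = 2 * q ^ (n + 1) := by ring

lemma Icc_subset_CC (hq1 : 1 / 7 ≤ q) (hq2 : q < 1 / 6) :
    Set.Icc (-3/5 : ℝ) (3/5) ⊆ CC q := by
  intro x hx
  have hq0 : (0:ℝ) < q := by linarith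
  rw [(CC_closed hq1 hq2).mem_iff_infDist_zero (CC_nonempty hq1 hq2)]
  have hle : ∀ n : ℕ, Metric.infDist x (CC q) ≤ 2 * q ^ n :=
    fun n => infDist_CC_bound hq1 hq2 n x hx
  have hlim : Filter.Tendsto (fun n : ℕ => 2 * q ^ n) Filter.atTop (nhds 0) := by
    have := tendsto_pow_atTop_nhds_zero_of_lt_one (le_of_lt hq0) (by linarith : q < 1)
    simpa using this.const_mul 2
  have h0 : Metric.infDist x (CC q) ≤ 0 :=
    le_of_tendsto_of_tendsto' tendsto_const_nhds hlim hle
  exact le_antisymm h0 Metric.infDist_nonneg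


def OGap (E : Set ℝ) (u v : ℝ) : Prop :=
  u < v ∧ u ∈ E ∧ v ∈ E ∧ Set.Ioo u v ∩ E = ∅

lemma component_eq_Ioo {E : Set ℝ} {u v x : ℝ} (huv : u < v) (huE : u ∈ E) (hvE : v ∈ E)
    (hdisj : Set.Ioo u v ∩ E = ∅) (hx : x ∈ Set.Ioo u v) :
    connectedComponentIn Eᶜ x = Set.Ioo u v := by
  have hsub : Set.Ioo u v ⊆ Eᶜ := fun z hz hzE =>
    Set.eq_empty_iff_forall_notMem.mp hdisj z ⟨hz, hzE⟩
  apply Set.Subset.antisymm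
  · intro y hy
    have hxc : x ∈ connectedComponentIn Eᶜ x := mem_connectedComponentIn (hsub hx)
    have hord : (connectedComponentIn Eᶜ x).OrdConnected :=
      isPreconnected_connectedComponentIn.ordConnected
    have hu : u ∉ connectedComponentIn Eᶜ x := fun h =>
      (connectedComponentIn_subset _ _ h) huE
    have hv : v ∉ connectedComponentIn Eᶜ x := fun h =>
      (connectedComponentIn_subset _ _ h) hvE
    constructor
    · by_contra hle
      push_neg at hle
      exact hu (hord.out hy hxc ⟨hle, le_of_lt hx.1⟩)
    · by_contra hle
      push_neg at hle
      exact hv (hord.out hxc hy ⟨le_of_lt hx.2, hle⟩)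
  · exact isPreconnected_Ioo.subset_connectedComponentIn hx hsub

lemma OGap.isGapOf {E : Set ℝ} {u v : ℝ} (h : OGap E u v) : IsGapOf E (Set.Ioo u v) := by
  obtain ⟨huv, huE, hvE, hdisj⟩ := h
  have hx : (u + v) / 2 ∈ Set.Ioo u v := ⟨by linarith, by linarith⟩
  have hsub : Set.Ioo u v ⊆ Eᶜ := fun z hz hzE =>
    Set.eq_empty_iff_forall_notMem.mp hdisj z ⟨hz, hzE⟩
  exact ⟨⟨(u + v) / 2, hsub hx, (component_eq_Ioo huv huE hvE hdisj hx).symm⟩,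
    Metric.isBounded_Ioo u v⟩

lemma isGapOf_iff_OGap {E : Set ℝ} (hE : IsClosed E) {G : Set ℝ} (hG : IsGapOf E G) :
    ∃ u v, OGap E u v ∧ G = Set.Ioo u v := by
  obtain ⟨⟨x, hxE, rfl⟩, hbd⟩ := hG
  have hxc : x ∈ (Eᶜ : Set ℝ) := hxE
  set G := connectedComponentIn Eᶜ x with hGdef
  have hGo : IsOpen G := hE.isOpen_compl.connectedComponentIn
  have hGsub : G ⊆ Eᶜ := connectedComponentIn_subset _ _
  have hxG : x ∈ G := mem_connectedComponentIn hxc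
  have hne : G.Nonempty := ⟨x, hxG⟩
  have hord : G.OrdConnected := isPreconnected_connectedComponentIn.ordConnected
  have hbdd : BddAbove G := hbd.bddAbove
  have hbddb : BddBelow G := hbd.bddBelow
  obtain ⟨δ, hδ, hball⟩ := Metric.isOpen_iff.mp hGo x hxG
  rw [Real.ball_eq_Ioo] at hball
  set u := sInf G with hu
  set v := sSup G with hv
  have hxu : u ≤ x - δ/2 := csInf_le hbddb (hball ⟨by linarith, by linarith⟩)
  have hxv : x + δ/2 ≤ v := le_csSup hbdd (hball ⟨by linarith, by linarith⟩)
  have huv : u < v := by linarith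
  have hGIoo : G = Set.Ioo u v := by
    apply Set.Subset.antisymm
    · intro y hy
      have h1 : u ≤ y := csInf_le hbddb hy
      have h2 : y ≤ v := le_csSup hbdd hy
      obtain ⟨δ', hδ', hball'⟩ := Metric.isOpen_iff.mp hGo y hy
      rw [Real.ball_eq_Ioo] at hball'
      have h3 : u ≤ y - δ'/2 := csInf_le hbddb (hball' ⟨by linarith, by linarith⟩)
      have h4 : y + δ'/2 ≤ v := le_csSup hbdd (hball' ⟨by linarith, by linarith⟩)
      exact ⟨by linarith, by linarith⟩
    · intro y hy
      obtain ⟨g1, hg1, hg1y⟩ := exists_lt_of_csInf_lt hne hy.1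
      obtain ⟨g2, hg2, hg2y⟩ := exists_lt_of_lt_csSup hne hy.2
      exact hord.out hg1 hg2 ⟨le_of_lt hg1y, le_of_lt hg2y⟩
  have hdisj : Set.Ioo u v ∩ E = ∅ := by
    rw [← hGIoo]
    exact Set.eq_empty_iff_forall_notMem.mpr (fun z ⟨hz1, hz2⟩ => hGsub hz1 hz2)
  have hxI : x ∈ Set.Ioo u v := hGIoo ▸ hxG
  have huE : u ∈ E := by
    by_contra huE
    obtain ⟨δ₂, hδ₂, hball₂⟩ := Metric.isOpen_iff.mp hE.isOpen_compl u huE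
    rw [Real.ball_eq_Ioo] at hball₂
    have hssub : Set.Ioo (u - δ₂/2) v ⊆ Eᶜ := by
      intro z hz
      rcases lt_or_ge u z with h | h
      · exact hGsub (hGIoo ▸ (⟨h, hz.2⟩ : z ∈ Set.Ioo u v))
      · exact hball₂ ⟨by linarith [hz.1], by linarith⟩
    have : Set.Ioo (u - δ₂/2) v ⊆ G :=
      isPreconnected_Ioo.subset_connectedComponentIn
        ⟨by linarith [hxI.1], hxI.2⟩ hssub
    have : u ∈ Set.Ioo u v := hGIoo ▸ this ⟨by linarith, huv⟩
    exact lt_irrefl u this.1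
  have hvE : v ∈ E := by
    by_contra hvE
    obtain ⟨δ₂, hδ₂, hball₂⟩ := Metric.isOpen_iff.mp hE.isOpen_compl v hvE
    rw [Real.ball_eq_Ioo] at hball₂
    have hssub : Set.Ioo u (v + δ₂/2) ⊆ Eᶜ := by
      intro z hz
      rcases lt_or_ge z v with h | h
      · exact hGsub (hGIoo ▸ (⟨hz.1, h⟩ : z ∈ Set.Ioo u v))
      · exact hball₂ ⟨by linarith, by linarith [hz.2]⟩
    have : Set.Ioo u (v + δ₂/2) ⊆ G :=
      isPreconnected_Ioo.subset_connectedComponentIn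
        ⟨hxI.1, by linarith [hxI.2]⟩ hssub
    have : v ∈ Set.Ioo u v := hGIoo ▸ this ⟨huv, by linarith⟩
    exact lt_irrefl v this.2
  exact ⟨u, v, ⟨huv, huE, hvE, hdisj⟩, hGIoo⟩

def Qbelow (E : Set ℝ) (p : ℝ) : Prop :=
  ∀ ε > 0, ∃ u v u' v' x y : ℝ, OGap E u v ∧ OGap E u' v' ∧
    p - ε < u ∧ v' < p ∧ v ≤ x ∧ x < y ∧ y ≤ u' ∧ Set.Icc x y ⊆ E

def Qabove (E : Set ℝ) (p : ℝ) : Prop :=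
  ∀ ε > 0, ∃ u v u' v' x y : ℝ, OGap E u v ∧ OGap E u' v' ∧
    p < u ∧ v' < p + ε ∧ v ≤ x ∧ x < y ∧ y ≤ u' ∧ Set.Icc x y ⊆ E

lemma notin_gap {E : Set ℝ} {u v z : ℝ} (hg : OGap E u v) (hz : z ∈ E) :
    z ≤ u ∨ v ≤ z := by
  rcases le_or_gt z u with h | h
  · exact Or.inl h
  rcases le_or_gt v z with h2 | h2
  · exact Or.inr h2
  exact absurd hz (fun hzE => Set.eq_empty_iff_forall_notMem.mp hg.2.2.2 z ⟨⟨h, h2⟩, hzE⟩)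

lemma comp_trapped {E : Set ℝ} {u v u' v' x y z : ℝ}
    (hg1 : OGap E u v) (hg2 : OGap E u' v') (hvx : v ≤ x) (hxy : x < y) (hyu' : y ≤ u')
    (hK : Set.Icc x y ⊆ E) (hz : z ∈ connectedComponentIn E x) : v ≤ z ∧ z ≤ u' := by
  have hzE : z ∈ E := connectedComponentIn_subset _ _ hz
  have hxE : x ∈ E := hK ⟨le_refl _, le_of_lt hxy⟩
  have hxc : x ∈ connectedComponentIn E x := mem_connectedComponentIn hxE
  have hord : (connectedComponentIn E x).OrdConnected :=
    isPreconnected_connectedComponentIn.ordConnected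
  constructor
  · by_contra hle
    push_neg at hle
    have hzu : z ≤ u := (notin_gap hg1 hzE).resolve_right (by linarith)
    have hmid : (u + v) / 2 ∈ connectedComponentIn E x :=
      hord.out hz hxc ⟨by linarith [hg1.1], by linarith [hg1.1]⟩
    exact Set.eq_empty_iff_forall_notMem.mp hg1.2.2.2 _
      ⟨⟨by linarith [hg1.1], by linarith [hg1.1]⟩, connectedComponentIn_subset _ _ hmid⟩
  · by_contra hle
    push_neg at hle
    have hzv : v' ≤ z := (notin_gap hg2 hzE).resolve_left (by linarith)
    have hmid : (u' + v') / 2 ∈ connectedComponentIn E x :=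
      hord.out hxc hz ⟨by linarith [hg2.1], by linarith [hg2.1]⟩
    exact Set.eq_empty_iff_forall_notMem.mp hg2.2.2.2 _
      ⟨⟨by linarith [hg2.1], by linarith [hg2.1]⟩, connectedComponentIn_subset _ _ hmid⟩

lemma comp_of_Qdata {E : Set ℝ} {u v u' v' x y : ℝ}
    (hg1 : OGap E u v) (hg2 : OGap E u' v') (hvx : v ≤ x) (hxy : x < y) (hyu' : y ≤ u')
    (hK : Set.Icc x y ⊆ E) :
    ∃ C, IsProperComponentOf E C ∧ C ⊆ Set.Icc v u' := by
  have hxE : x ∈ E := hK ⟨le_refl _, le_of_lt hxy⟩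
  refine ⟨connectedComponentIn E x, ⟨⟨x, hxE, rfl⟩, ?_⟩, ?_⟩
  · have hsub : Set.Icc x y ⊆ connectedComponentIn E x :=
      isPreconnected_Icc.subset_connectedComponentIn ⟨le_refl _, le_of_lt hxy⟩ hK
    exact ⟨x, hsub ⟨le_refl _, le_of_lt hxy⟩, y, hsub ⟨le_of_lt hxy, le_refl _⟩, ne_of_lt hxy⟩
  · intro z hz
    exact comp_trapped hg1 hg2 hvx hxy hyu' hK hz

lemma gap_endpoint_conditions {E : Set ℝ} {A B : ℝ}
    (hOG : OGap E A B) (hQA : Qbelow E A) (hQB : Qabove E B) :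
    ∀ p, p = sInf (Set.Ioo A B) ∨ p = sSup (Set.Ioo A B) →
      (∀ ε > 0, ∃ G', IsGapOf E G' ∧ G' ≠ Set.Ioo A B ∧
        G' ⊆ Set.Ioo (p - ε) (p + ε)) ∧
      (∀ ε > 0, ∃ C, IsProperComponentOf E C ∧ C ⊆ Set.Ioo (p - ε) (p + ε)) := by
  have hAB : A < B := hOG.1
  intro p hp
  rcases hp with rfl | rfl
  · rw [csInf_Ioo hAB]
    constructor
    · intro ε hε
      obtain ⟨u, v, u', v', x, y, hg1, hg2, hu, hv', hvx, hxy, hyu', hK⟩ := hQA ε hε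
      have hvA : v ≤ u' := by linarith
      refine ⟨Set.Ioo u v, hg1.isGapOf, ?_, ?_⟩
      · intro heq
        have : (u + v) / 2 ∈ Set.Ioo A B := heq ▸ ⟨by linarith [hg1.1], by linarith [hg1.1]⟩
        have hvA2 : v < A := by linarith [hg2.1]
        linarith [this.1, hg1.1]
      · intro z hz
        have hvA2 : v < A := by linarith [hg2.1]
        exact ⟨by linarith [hz.1], by linarith [hz.2, hε]⟩
    · intro ε hε
      obtain ⟨u, v, u', v', x, y, hg1, hg2, hu, hv', hvx, hxy, hyu', hK⟩ := hQA ε hε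
      obtain ⟨C, hC, hCsub⟩ := comp_of_Qdata hg1 hg2 hvx hxy hyu' hK
      refine ⟨C, hC, fun z hz => ?_⟩
      have := hCsub hz
      exact ⟨by linarith [this.1, hg1.1], by linarith [this.2, hg2.1, hε]⟩
  · rw [csSup_Ioo hAB]
    constructor
    · intro ε hε
      obtain ⟨u, v, u', v', x, y, hg1, hg2, hu, hv', hvx, hxy, hyu', hK⟩ := hQB ε hε
      refine ⟨Set.Ioo u v, hg1.isGapOf, ?_, ?_⟩
      · intro heq
        have : (u + v) / 2 ∈ Set.Ioo A B := heq ▸ ⟨by linarith [hg1.1], by linarith [hg1.1]⟩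
        linarith [this.2, hg1.1]
      · intro z hz
        have : v < v' := by linarith [hg2.1]
        exact ⟨by linarith [hz.1, hε], by linarith [hz.2, hg2.1]⟩
    · intro ε hε
      obtain ⟨u, v, u', v', x, y, hg1, hg2, hu, hv', hvx, hxy, hyu', hK⟩ := hQB ε hε
      obtain ⟨C, hC, hCsub⟩ := comp_of_Qdata hg1 hg2 hvx hxy hyu' hK
      refine ⟨C, hC, fun z hz => ?_⟩
      have := hCsub hz
      exact ⟨by linarith [this.1, hg1.1, hε], by linarith [this.2, hg2.1]⟩

lemma mem_bounds (hq1 : 1 / 7 ≤ q) (hq2 : q < 1 / 6) {z : ℝ} (hz : z ∈ CC q) :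
    -1 ≤ z ∧ z ≤ 1 := Set.mem_Icc.mp (CC_subset hq1 hq2 hz)

/-- no point of `CC q` lies in the fundamental gap. -/
lemma no_mid (hq1 : 1 / 7 ≤ q) (hq2 : q < 1 / 6) {z : ℝ} (hz : z ∈ CC q) :
    z ≤ (3 + 2*q)/5 ∨ 1 - 2*q ≤ z := by
  obtain ⟨e, y, he, hy, rfl⟩ := CC_decomp hq1 hq2 hz
  obtain ⟨hy1, hy2⟩ := mem_bounds hq1 hq2 hy
  rcases he with rfl | rfl | rfl | rfl | rfl | rfl | rfl | rfl | rfl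
  · left; nlinarith
  · left; nlinarith
  · left; nlinarith
  · left; nlinarith
  · left; nlinarith
  · left; nlinarith
  · left; nlinarith
  · right; nlinarith
  · left; nlinarith

lemma g1_mem (hq1 : 1 / 7 ≤ q) (hq2 : q < 1 / 6) : (3 + 2*q)/5 ∈ CC q := by
  have h := CC_map hq1 hq2 (show Ddig 3 by simp [Ddig]) (one_mem_CC hq1 hq2)
  have he : (1 - q) / 5 * 3 + q * 1 = (3 + 2*q)/5 := by ring
  rwa [he] at h

lemma g2_mem (hq1 : 1 / 7 ≤ q) (hq2 : q < 1 / 6) : 1 - 2*q ∈ CC q := by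
  have h := CC_map hq1 hq2 (show Ddig 5 by simp [Ddig])
    (neg_mem_CC (one_mem_CC hq1 hq2))
  have he : (1 - q) / 5 * 5 + q * (-1) = 1 - 2*q := by ring
  rwa [he] at h

lemma OG_G0 (hq1 : 1 / 7 ≤ q) (hq2 : q < 1 / 6) : OGap (CC q) ((3 + 2*q)/5) (1 - 2*q) := by
  refine ⟨by nlinarith, g1_mem hq1 hq2, g2_mem hq1 hq2, ?_⟩
  rw [Set.eq_empty_iff_forall_notMem]
  rintro z ⟨hzI, hzC⟩
  rcases no_mid hq1 hq2 hzC with h | h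
  · linarith [hzI.1]
  · linarith [hzI.2]

lemma f5_preimage (hq1 : 1 / 7 ≤ q) (hq2 : q < 1 / 6) {z : ℝ} (hz : z ∈ CC q)
    (hz2 : 1 - 2*q ≤ z) : ∃ w, w ∈ CC q ∧ z = 1 - q + q * w := by
  obtain ⟨e, y, he, hy, rfl⟩ := CC_decomp hq1 hq2 hz
  obtain ⟨hy1, hy2⟩ := mem_bounds hq1 hq2 hy
  rcases he with rfl | rfl | rfl | rfl | rfl | rfl | rfl | rfl | rfl
  · exfalso; nlinarith
  · exfalso; nlinarith
  · exfalso; nlinarith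
  · exfalso; nlinarith
  · exfalso; nlinarith
  · exfalso; nlinarith
  · exfalso; nlinarith
  · exact ⟨y, hy, by ring⟩
  · exfalso; nlinarith

lemma f3_preimage (hq1 : 1 / 7 ≤ q) (hq2 : q < 1 / 6) {z : ℝ} (hz : z ∈ CC q)
    (hz1 : 3/5 ≤ z) (hz2 : z ≤ (3 + 2*q)/5) :
    ∃ w, w ∈ CC q ∧ 3/5 ≤ w ∧ z = (3 - 3*q)/5 + q * w := by
  obtain ⟨e, y, he, hy, rfl⟩ := CC_decomp hq1 hq2 hz
  obtain ⟨hy1, hy2⟩ := mem_bounds hq1 hq2 hy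
  rcases he with rfl | rfl | rfl | rfl | rfl | rfl | rfl | rfl | rfl
  · exfalso; nlinarith
  · exfalso; nlinarith
  · exfalso; nlinarith
  · exfalso; nlinarith
  · exfalso; nlinarith
  · refine ⟨y, hy, by nlinarith, by ring⟩
  · exfalso; nlinarith
  · exfalso; nlinarith
  · exfalso; nlinarith

lemma f5_mem (hq1 : 1 / 7 ≤ q) (hq2 : q < 1 / 6) {w : ℝ} (hw : w ∈ CC q) :
    1 - q + q * w ∈ CC q := by
  have h := CC_map hq1 hq2 (show Ddig 5 by simp [Ddig]) hw
  have he : (1 - q) / 5 * 5 + q * w = 1 - q + q * w := by ring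
  rwa [he] at h

lemma f3_mem (hq1 : 1 / 7 ≤ q) (hq2 : q < 1 / 6) {w : ℝ} (hw : w ∈ CC q) :
    (3 - 3*q)/5 + q * w ∈ CC q := by
  have h := CC_map hq1 hq2 (show Ddig 3 by simp [Ddig]) hw
  have he : (1 - q) / 5 * 3 + q * w = (3 - 3*q)/5 + q * w := by ring
  rwa [he] at h

lemma OG_neg (hq1 : 1 / 7 ≤ q) (hq2 : q < 1 / 6) {u v : ℝ} (h : OGap (CC q) u v) :
    OGap (CC q) (-v) (-u) := by
  obtain ⟨huv, hu, hv, hdisj⟩ := h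
  refine ⟨by linarith, neg_mem_CC hv, neg_mem_CC hu, ?_⟩
  rw [Set.eq_empty_iff_forall_notMem]
  rintro z ⟨hzI, hzC⟩
  exact Set.eq_empty_iff_forall_notMem.mp hdisj (-z)
    ⟨⟨by linarith [hzI.2], by linarith [hzI.1]⟩, neg_mem_CC hzC⟩

lemma OG_f5 (hq1 : 1 / 7 ≤ q) (hq2 : q < 1 / 6) {u v : ℝ} (h : OGap (CC q) u v) :
    OGap (CC q) (1 - q + q * u) (1 - q + q * v) := by
  have hq0 : (0:ℝ) < q := by linarith
  obtain ⟨huv, hu, hv, hdisj⟩ := h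
  obtain ⟨hu1, hu2⟩ := mem_bounds hq1 hq2 hu
  refine ⟨by nlinarith, f5_mem hq1 hq2 hu, f5_mem hq1 hq2 hv, ?_⟩
  rw [Set.eq_empty_iff_forall_notMem]
  rintro z ⟨hzI, hzC⟩
  have hz2 : 1 - 2*q ≤ z := by nlinarith [hzI.1]
  obtain ⟨w, hw, rfl⟩ := f5_preimage hq1 hq2 hzC hz2
  exact Set.eq_empty_iff_forall_notMem.mp hdisj w
    ⟨⟨by nlinarith [hzI.1], by nlinarith [hzI.2]⟩, hw⟩

lemma OG_f3 (hq1 : 1 / 7 ≤ q) (hq2 : q < 1 / 6) {u v : ℝ} (h : OGap (CC q) u v)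
    (hu35 : 3/5 ≤ u) :
    OGap (CC q) ((3 - 3*q)/5 + q * u) ((3 - 3*q)/5 + q * v) := by
  have hq0 : (0:ℝ) < q := by linarith
  obtain ⟨huv, hu, hv, hdisj⟩ := h
  obtain ⟨hv1, hv2⟩ := mem_bounds hq1 hq2 hv
  refine ⟨by nlinarith, f3_mem hq1 hq2 hu, f3_mem hq1 hq2 hv, ?_⟩
  rw [Set.eq_empty_iff_forall_notMem]
  rintro z ⟨hzI, hzC⟩
  have hz1 : 3/5 ≤ z := by nlinarith [hzI.1]
  have hz2 : z ≤ (3 + 2*q)/5 := by nlinarith [hzI.2]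
  obtain ⟨w, hw, hw35, rfl⟩ := f3_preimage hq1 hq2 hzC hz1 hz2
  exact Set.eq_empty_iff_forall_notMem.mp hdisj w
    ⟨⟨by nlinarith [hzI.1], by nlinarith [hzI.2]⟩, hw⟩

lemma gap_loc (hq1 : 1 / 7 ≤ q) (hq2 : q < 1 / 6) {u v : ℝ} (h : OGap (CC q) u v) :
    3/5 ≤ u ∨ v ≤ -3/5 := by
  by_contra hcon
  push_neg at hcon
  obtain ⟨hu35, hv35⟩ := hcon
  set m1 := max u (-3/5 : ℝ) with hm1
  set m2 := min v (3/5 : ℝ) with hm2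
  have h1 : u ≤ m1 := le_max_left _ _
  have h2 : (-3/5 : ℝ) ≤ m1 := le_max_right _ _
  have h3 : m2 ≤ v := min_le_left _ _
  have h4 : m2 ≤ (3/5 : ℝ) := min_le_right _ _
  have h5 : m1 < m2 := by
    rw [hm1, hm2]
    apply max_lt <;> apply lt_min
    · exact h.1
    · exact hu35
    · exact hv35
    · norm_num
  set z := (m1 + m2)/2 with hz
  have hzC : z ∈ CC q := Icc_subset_CC hq1 hq2 ⟨by linarith, by linarith⟩
  exact Set.eq_empty_iff_forall_notMem.mp h.2.2.2 z
    ⟨⟨by linarith, by linarith⟩, hzC⟩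

lemma Icc_map_neg {x y : ℝ} (hK : Set.Icc x y ⊆ CC q) :
    Set.Icc (-y) (-x) ⊆ CC q := by
  intro z hz
  have : -z ∈ Set.Icc x y := ⟨by linarith [hz.2], by linarith [hz.1]⟩
  simpa using neg_mem_CC (hK this)

lemma Icc_map_f5 (hq1 : 1 / 7 ≤ q) (hq2 : q < 1 / 6) {x y : ℝ} (hK : Set.Icc x y ⊆ CC q) :
    Set.Icc (1 - q + q * x) (1 - q + q * y) ⊆ CC q := by
  have hq0 : (0:ℝ) < q := by linarith
  intro z hz
  have hw : (z - (1 - q))/q ∈ Set.Icc x y := by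
    constructor
    · rw [le_div_iff₀ hq0]; linarith [hz.1]
    · rw [div_le_iff₀ hq0]; linarith [hz.2]
  have := f5_mem hq1 hq2 (hK hw)
  have he : 1 - q + q * ((z - (1 - q))/q) = z := by field_simp; ring
  rwa [he] at this

lemma Icc_map_f3 (hq1 : 1 / 7 ≤ q) (hq2 : q < 1 / 6) {x y : ℝ} (hK : Set.Icc x y ⊆ CC q) :
    Set.Icc ((3 - 3*q)/5 + q * x) ((3 - 3*q)/5 + q * y) ⊆ CC q := by
  have hq0 : (0:ℝ) < q := by linarith
  intro z hz
  have hw : (z - (3 - 3*q)/5)/q ∈ Set.Icc x y := by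
    constructor
    · rw [le_div_iff₀ hq0]; linarith [hz.1]
    · rw [div_le_iff₀ hq0]; linarith [hz.2]
  have := f3_mem hq1 hq2 (hK hw)
  have he : (3 - 3*q)/5 + q * ((z - (3 - 3*q)/5)/q) = z := by field_simp; ring
  rwa [he] at this

lemma Qabove_neg (hq1 : 1 / 7 ≤ q) (hq2 : q < 1 / 6) {p : ℝ} (h : Qbelow (CC q) p) :
    Qabove (CC q) (-p) := by
  intro ε hε
  obtain ⟨u, v, u', v', x, y, hg1, hg2, hu, hv', hvx, hxy, hyu', hK⟩ := h ε hε
  exact ⟨-v', -u', -v, -u, -y, -x, OG_neg hq1 hq2 hg2, OG_neg hq1 hq2 hg1,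
    by linarith, by linarith, by linarith, by linarith, by linarith, Icc_map_neg hK⟩

lemma Qbelow_neg (hq1 : 1 / 7 ≤ q) (hq2 : q < 1 / 6) {p : ℝ} (h : Qabove (CC q) p) :
    Qbelow (CC q) (-p) := by
  intro ε hε
  obtain ⟨u, v, u', v', x, y, hg1, hg2, hu, hv', hvx, hxy, hyu', hK⟩ := h ε hε
  exact ⟨-v', -u', -v, -u, -y, -x, OG_neg hq1 hq2 hg2, OG_neg hq1 hq2 hg1,
    by linarith, by linarith, by linarith, by linarith, by linarith, Icc_map_neg hK⟩

lemma Qbelow_f5 (hq1 : 1 / 7 ≤ q) (hq2 : q < 1 / 6) {p : ℝ} (h : Qbelow (CC q) p) :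
    Qbelow (CC q) (1 - q + q * p) := by
  have hq0 : (0:ℝ) < q := by linarith
  intro ε hε
  obtain ⟨u, v, u', v', x, y, hg1, hg2, hu, hv', hvx, hxy, hyu', hK⟩ := h ε hε
  refine ⟨1 - q + q * u, 1 - q + q * v, 1 - q + q * u', 1 - q + q * v',
    1 - q + q * x, 1 - q + q * y, OG_f5 hq1 hq2 hg1, OG_f5 hq1 hq2 hg2,
    by nlinarith, by nlinarith, by nlinarith, by nlinarith, by nlinarith,
    Icc_map_f5 hq1 hq2 hK⟩

lemma Qabove_f5 (hq1 : 1 / 7 ≤ q) (hq2 : q < 1 / 6) {p : ℝ} (h : Qabove (CC q) p) :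
    Qabove (CC q) (1 - q + q * p) := by
  have hq0 : (0:ℝ) < q := by linarith
  intro ε hε
  obtain ⟨u, v, u', v', x, y, hg1, hg2, hu, hv', hvx, hxy, hyu', hK⟩ := h ε hε
  refine ⟨1 - q + q * u, 1 - q + q * v, 1 - q + q * u', 1 - q + q * v',
    1 - q + q * x, 1 - q + q * y, OG_f5 hq1 hq2 hg1, OG_f5 hq1 hq2 hg2,
    by nlinarith, by nlinarith, by nlinarith, by nlinarith, by nlinarith,
    Icc_map_f5 hq1 hq2 hK⟩

lemma Qbelow_f3 (hq1 : 1 / 7 ≤ q) (hq2 : q < 1 / 6) {p : ℝ} (hp : 3/5 ≤ p)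
    (h : Qbelow (CC q) p) : Qbelow (CC q) ((3 - 3*q)/5 + q * p) := by
  have hq0 : (0:ℝ) < q := by linarith
  intro ε hε
  have hε' : (0:ℝ) < min ε 1 := lt_min hε one_pos
  obtain ⟨u, v, u', v', x, y, hg1, hg2, hu, hv', hvx, hxy, hyu', hK⟩ := h _ hε'
  have hmε : min ε 1 ≤ ε := min_le_left _ _
  have hm1 : min ε 1 ≤ 1 := min_le_right _ _
  have hu35 : 3/5 ≤ u := by
    rcases gap_loc hq1 hq2 hg1 with h35 | h35
    · exact h35
    · exfalso; linarith [hg1.1]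
  have hu'35 : 3/5 ≤ u' := by
    rcases gap_loc hq1 hq2 hg2 with h35 | h35
    · exact h35
    · exfalso
      have : v ≤ v' := by linarith [hg2.1]
      linarith [hg1.1]
  refine ⟨(3 - 3*q)/5 + q * u, (3 - 3*q)/5 + q * v, (3 - 3*q)/5 + q * u',
    (3 - 3*q)/5 + q * v', (3 - 3*q)/5 + q * x, (3 - 3*q)/5 + q * y,
    OG_f3 hq1 hq2 hg1 hu35, OG_f3 hq1 hq2 hg2 hu'35,
    by nlinarith, by nlinarith, by nlinarith, by nlinarith, by nlinarith,
    Icc_map_f3 hq1 hq2 hK⟩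

lemma Qabove_f3 (hq1 : 1 / 7 ≤ q) (hq2 : q < 1 / 6) {p : ℝ} (hp : 3/5 ≤ p)
    (h : Qabove (CC q) p) : Qabove (CC q) ((3 - 3*q)/5 + q * p) := by
  have hq0 : (0:ℝ) < q := by linarith
  intro ε hε
  obtain ⟨u, v, u', v', x, y, hg1, hg2, hu, hv', hvx, hxy, hyu', hK⟩ := h ε hε
  have hu35 : 3/5 ≤ u := by linarith
  have hu'35 : 3/5 ≤ u' := by linarith [hg1.1]
  refine ⟨(3 - 3*q)/5 + q * u, (3 - 3*q)/5 + q * v, (3 - 3*q)/5 + q * u',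
    (3 - 3*q)/5 + q * v', (3 - 3*q)/5 + q * x, (3 - 3*q)/5 + q * y,
    OG_f3 hq1 hq2 hg1 hu35, OG_f3 hq1 hq2 hg2 hu'35,
    by nlinarith, by nlinarith, by nlinarith, by nlinarith, by nlinarith,
    Icc_map_f3 hq1 hq2 hK⟩

lemma Qbelow_one (hq1 : 1 / 7 ≤ q) (hq2 : q < 1 / 6) : Qbelow (CC q) 1 := by
  have hq0 : (0:ℝ) < q := by linarith
  have P : ∀ n : ℕ, ∃ u v u' v' x y : ℝ, OGap (CC q) u v ∧ OGap (CC q) u' v' ∧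
      1 - 2*q^n < u ∧ v' < 1 ∧ v ≤ x ∧ x < y ∧ y ≤ u' ∧ Set.Icc x y ⊆ CC q := by
    intro n
    induction n with
    | zero =>
      refine ⟨-(1 - 2*q), -((3 + 2*q)/5), (3 + 2*q)/5, 1 - 2*q, -3/5, 3/5,
        OG_neg hq1 hq2 (OG_G0 hq1 hq2), OG_G0 hq1 hq2,
        by norm_num; linarith, by linarith, by linarith, by norm_num,
        by linarith, Icc_subset_CC hq1 hq2⟩
    | succ n ih =>
      obtain ⟨u, v, u', v', x, y, hg1, hg2, hu, hv', hvx, hxy, hyu', hK⟩ := ih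
      refine ⟨1 - q + q * u, 1 - q + q * v, 1 - q + q * u', 1 - q + q * v',
        1 - q + q * x, 1 - q + q * y, OG_f5 hq1 hq2 hg1, OG_f5 hq1 hq2 hg2,
        by rw [pow_succ]; nlinarith, by nlinarith, by nlinarith, by nlinarith,
        by nlinarith, Icc_map_f5 hq1 hq2 hK⟩
  intro ε hε
  obtain ⟨n, hn⟩ := exists_pow_lt_of_lt_one (show (0:ℝ) < ε/2 by linarith)
    (show q < 1 by linarith)
  obtain ⟨u, v, u', v', x, y, hg1, hg2, hu, hv', hvx, hxy, hyu', hK⟩ := P n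
  exact ⟨u, v, u', v', x, y, hg1, hg2, by linarith, hv', hvx, hxy, hyu', hK⟩

lemma Qabove_neg_one (hq1 : 1 / 7 ≤ q) (hq2 : q < 1 / 6) : Qabove (CC q) (-1) :=
  Qabove_neg hq1 hq2 (Qbelow_one hq1 hq2)

lemma Qbelow_g1 (hq1 : 1 / 7 ≤ q) (hq2 : q < 1 / 6) : Qbelow (CC q) ((3 + 2*q)/5) := by
  have h := Qbelow_f3 hq1 hq2 (by norm_num : (3:ℝ)/5 ≤ 1) (Qbelow_one hq1 hq2)
  have he : (3 - 3*q)/5 + q * 1 = (3 + 2*q)/5 := by ring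
  rwa [he] at h

lemma Qabove_g2 (hq1 : 1 / 7 ≤ q) (hq2 : q < 1 / 6) : Qabove (CC q) (1 - 2*q) := by
  have h := Qabove_f5 hq1 hq2 (Qabove_neg_one hq1 hq2)
  have he : 1 - q + q * (-1) = 1 - 2*q := by ring
  rwa [he] at h

lemma OG_f3_inv (hq1 : 1 / 7 ≤ q) (hq2 : q < 1 / 6) {A B : ℝ} (hOG : OGap (CC q) A B)
    (hA35 : 3/5 ≤ A) (hB : B ≤ (3 + 2*q)/5) :
    ∃ A' B', OGap (CC q) A' B' ∧ 3/5 ≤ A' ∧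
      A = (3 - 3*q)/5 + q * A' ∧ B = (3 - 3*q)/5 + q * B' := by
  have hq0 : (0:ℝ) < q := by linarith
  obtain ⟨hAB, hA, hBm, hdisj⟩ := hOG
  obtain ⟨A', hA', hA'35, hAeq⟩ := f3_preimage hq1 hq2 hA hA35 (by linarith)
  obtain ⟨B', hB', hB'35, hBeq⟩ := f3_preimage hq1 hq2 hBm (by linarith) hB
  refine ⟨A', B', ⟨by nlinarith, hA', hB', ?_⟩, hA'35, hAeq, hBeq⟩
  rw [Set.eq_empty_iff_forall_notMem]
  rintro w ⟨hwI, hwC⟩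
  have : (3 - 3*q)/5 + q * w ∈ Set.Ioo A B ∩ CC q := by
    refine ⟨⟨?_, ?_⟩, f3_mem hq1 hq2 hwC⟩
    · rw [hAeq]; nlinarith [hwI.1]
    · rw [hBeq]; nlinarith [hwI.2]
  rw [hdisj] at this
  exact this

lemma OG_f5_inv (hq1 : 1 / 7 ≤ q) (hq2 : q < 1 / 6) {A B : ℝ} (hOG : OGap (CC q) A B)
    (hA : 1 - 2*q ≤ A) :
    ∃ A' B', OGap (CC q) A' B' ∧ A = 1 - q + q * A' ∧ B = 1 - q + q * B' := by
  have hq0 : (0:ℝ) < q := by linarith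
  obtain ⟨hAB, hAm, hBm, hdisj⟩ := hOG
  obtain ⟨A', hA', hAeq⟩ := f5_preimage hq1 hq2 hAm hA
  obtain ⟨B', hB', hBeq⟩ := f5_preimage hq1 hq2 hBm (by linarith)
  refine ⟨A', B', ⟨by nlinarith, hA', hB', ?_⟩, hAeq, hBeq⟩
  rw [Set.eq_empty_iff_forall_notMem]
  rintro w ⟨hwI, hwC⟩
  have : 1 - q + q * w ∈ Set.Ioo A B ∩ CC q := by
    refine ⟨⟨?_, ?_⟩, f5_mem hq1 hq2 hwC⟩
    · rw [hAeq]; nlinarith [hwI.1]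
    · rw [hBeq]; nlinarith [hwI.2]
  rw [hdisj] at this
  exact this

lemma main_ind (hq1 : 1 / 7 ≤ q) (hq2 : q < 1 / 6) :
    ∀ n : ℕ, ∀ A B : ℝ, OGap (CC q) A B → 2*q^n < B - A →
      Qbelow (CC q) A ∧ Qabove (CC q) B := by
  have hq0 : (0:ℝ) < q := by linarith
  intro n
  induction n with
  | zero =>
    intro A B hOG hlen
    exfalso
    obtain ⟨hA1, hA2⟩ := mem_bounds hq1 hq2 hOG.2.1
    obtain ⟨hB1, hB2⟩ := mem_bounds hq1 hq2 hOG.2.2.1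
    simp only [pow_zero] at hlen
    linarith
  | succ n ih =>
    have claim : ∀ A B : ℝ, OGap (CC q) A B → 2*q^(n+1) < B - A → 3/5 ≤ A →
        Qbelow (CC q) A ∧ Qabove (CC q) B := by
      intro A B hOG hlen hA35
      have hAB := hOG.1
      rcases notin_gap hOG (g1_mem hq1 hq2) with hg1A | hBg1
      · -- (3+2q)/5 ≤ A
        rcases notin_gap hOG (g2_mem hq1 hq2) with hg2A | hBg2
        · -- 1 - 2q ≤ A : f5 route
          obtain ⟨A', B', hOG', hAeq, hBeq⟩ := OG_f5_inv hq1 hq2 hOG hg2A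
          have hlen' : 2*q^n < B' - A' := by
            have : B - A = q * (B' - A') := by rw [hAeq, hBeq]; ring
            rw [this, pow_succ] at *
            nlinarith
          obtain ⟨hQA', hQB'⟩ := ih A' B' hOG' hlen'
          exact ⟨hAeq ▸ Qbelow_f5 hq1 hq2 hQA', hBeq ▸ Qabove_f5 hq1 hq2 hQB'⟩
        · -- B ≤ 1 - 2q : A = g1, B = g2
          have hAg1 : A = (3 + 2*q)/5 := by
            rcases no_mid hq1 hq2 hOG.2.1 with h | h
            · linarith
            · exfalso; linarith
          have hBg2 : B = 1 - 2*q := by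
            rcases no_mid hq1 hq2 hOG.2.2.1 with h | h
            · exfalso; linarith
            · linarith
          rw [hAg1, hBg2]
          exact ⟨Qbelow_g1 hq1 hq2, Qabove_g2 hq1 hq2⟩
      · -- B ≤ (3+2q)/5 : f3 route
        obtain ⟨A', B', hOG', hA'35, hAeq, hBeq⟩ := OG_f3_inv hq1 hq2 hOG hA35 hBg1
        have hlen' : 2*q^n < B' - A' := by
          have : B - A = q * (B' - A') := by rw [hAeq, hBeq]; ring
          rw [this, pow_succ] at *
          nlinarith
        obtain ⟨hQA', hQB'⟩ := ih A' B' hOG' hlen'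
        have hB'35 : 3/5 ≤ B' := by linarith [hOG'.1]
        exact ⟨hAeq ▸ Qbelow_f3 hq1 hq2 hA'35 hQA',
          hBeq ▸ Qabove_f3 hq1 hq2 hB'35 hQB'⟩
    intro A B hOG hlen
    rcases gap_loc hq1 hq2 hOG with hA35 | hBneg
    · exact claim A B hOG hlen hA35
    · have hOGn := OG_neg hq1 hq2 hOG
      obtain ⟨hQ1, hQ2⟩ := claim (-B) (-A) hOGn (by linarith) (by linarith)
      constructor
      · have := Qbelow_neg hq1 hq2 hQ2
        rwa [neg_neg] at this
      · have := Qabove_neg hq1 hq2 hQ1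
        rwa [neg_neg] at this

lemma gap_Q (hq1 : 1 / 7 ≤ q) (hq2 : q < 1 / 6) {A B : ℝ} (hOG : OGap (CC q) A B) :
    Qbelow (CC q) A ∧ Qabove (CC q) B := by
  obtain ⟨n, hn⟩ := exists_pow_lt_of_lt_one
    (show (0:ℝ) < (B - A)/2 by linarith [hOG.1]) (show q < 1 by linarith)
  exact main_ind hq1 hq2 n A B hOG (by linarith)

lemma CC_approx (hq1 : 1 / 7 ≤ q) (hq2 : q < 1 / 6) :
    ∀ n : ℕ, ∀ x ∈ CC q, ∃ y ∈ CC q, y ≠ x ∧ |y - x| ≤ 2 * q ^ n := by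
  have hq0 : (0:ℝ) < q := by linarith
  intro n
  induction n with
  | zero =>
    intro x hx
    obtain ⟨hx1, hx2⟩ := mem_bounds hq1 hq2 hx
    by_cases h : x = 3/5
    · refine ⟨-3/5, Icc_subset_CC hq1 hq2 ⟨le_refl _, by norm_num⟩, ?_, ?_⟩
      · rw [h]; norm_num
      · rw [h, show (-3/5 : ℝ) - 3/5 = -(6/5) by norm_num, abs_neg,
          abs_of_nonneg (by norm_num : (0:ℝ) ≤ 6/5)]
        norm_num
    · refine ⟨3/5, Icc_subset_CC hq1 hq2 ⟨by norm_num, le_refl _⟩, Ne.symm h, ?_⟩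
      rw [abs_le]
      constructor <;> simp <;> linarith
  | succ n ih =>
    intro x hx
    obtain ⟨e, x', he, hx', rfl⟩ := CC_decomp hq1 hq2 hx
    obtain ⟨y', hy', hne, hdist⟩ := ih x' hx'
    refine ⟨(1 - q)/5 * e + q * y', CC_map hq1 hq2 he hy', ?_, ?_⟩
    · intro heq
      apply hne
      have : q * y' = q * x' := by linarith [heq]
      exact mul_left_cancel₀ (ne_of_gt hq0) this
    · have : (1 - q)/5 * e + q * y' - ((1 - q)/5 * e + q * x') = q * (y' - x') := by ring
      rw [this, abs_mul, abs_of_pos hq0, pow_succ]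
      calc q * |y' - x'| ≤ q * (2 * q ^ n) := by nlinarith [abs_nonneg (y' - x')]
      _ = 2 * (q ^ n * q) := by ring

lemma CC_perfect (hq1 : 1 / 7 ≤ q) (hq2 : q < 1 / 6) : Perfect (CC q) := by
  refine ⟨CC_closed hq1 hq2, ?_⟩
  intro x hx
  rw [accPt_iff_nhds]
  intro U hU
  obtain ⟨ε, hε, hball⟩ := Metric.mem_nhds_iff.mp hU
  obtain ⟨n, hn⟩ := exists_pow_lt_of_lt_one (show (0:ℝ) < ε/2 by linarith)
    (show q < 1 by linarith)
  obtain ⟨y, hy, hne, hdist⟩ := CC_approx hq1 hq2 n x hx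
  refine ⟨y, ⟨hball ?_, hy⟩, hne⟩
  rw [Metric.mem_ball, Real.dist_eq]
  linarith

lemma OG_upper (hq1 : 1 / 7 ≤ q) (hq2 : q < 1 / 6) (k : ℕ) :
    OGap (CC q) (1 - q^k * ((2 - 2*q)/5)) (1 - q^k * (2*q)) := by
  induction k with
  | zero =>
    have h := OG_G0 hq1 hq2
    have h1 : 1 - q^0 * ((2 - 2*q)/5) = (3 + 2*q)/5 := by ring
    have h2 : 1 - q^0 * (2*q) = 1 - 2*q := by ring
    rw [h1, h2]
    exact h
  | succ k ih =>
    have h := OG_f5 hq1 hq2 ih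
    have h1 : 1 - q + q * (1 - q^k * ((2 - 2*q)/5)) = 1 - q^(k+1) * ((2 - 2*q)/5) := by ring
    have h2 : 1 - q + q * (1 - q^k * (2*q)) = 1 - q^(k+1) * (2*q) := by ring
    rw [h1, h2] at h
    exact h

lemma gaps_infinite (hq1 : 1 / 7 ≤ q) (hq2 : q < 1 / 6) :
    {G : Set ℝ | IsGapOf (CC q) G}.Infinite := by
  have hq0 : (0:ℝ) < q := by linarith
  refine Set.infinite_of_injective_forall_mem
    (f := fun k : ℕ => Set.Ioo (1 - q^k * ((2 - 2*q)/5)) (1 - q^k * (2*q))) ?_ ?_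
  · intro k j heq
    simp only [] at heq
    by_contra hne
    have hsup : ∀ m : ℕ, sSup (Set.Ioo (1 - q^m * ((2 - 2*q)/5)) (1 - q^m * (2*q)))
        = 1 - q^m * (2*q) := fun m => csSup_Ioo (OG_upper hq1 hq2 m).1
    have : 1 - q^k * (2*q) = 1 - q^j * (2*q) := by
      rw [← hsup k, ← hsup j, heq]
    have hkj : q^k = q^j := by
      have : q^k * (2*q) = q^j * (2*q) := by linarith
      exact mul_right_cancel₀ (by positivity) this
    rcases Nat.lt_or_ge k j with h | h
    · exact absurd hkj (ne_of_gt (pow_lt_pow_right_of_lt_one₀ hq0 (by linarith) h))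
    · have h' : j < k := by omega
      exact absurd hkj.symm (ne_of_gt (pow_lt_pow_right_of_lt_one₀ hq0 (by linarith) h'))
  · intro k
    exact (OG_upper hq1 hq2 k).isGapOf

/-- For every `q ∈ [1/7, 1/6)`, the `2`-periodic sequence with `a_{2n-1} = (1-6q)/5` and
`a_{2n} = (2-7q)/(2+3q)` satisfies `a₁ < 1/3 < a₂` and `C(a) - C(a)` is a Cantorval. -/
theorem cantorval_multigeometric (q : ℝ) (hq1 : 1 / 7 ≤ q) (hq2 : q < 1 / 6)
    (a : ℕ → ℝ)
    (haq : a = fun n => if n % 2 = 1 then (1 - 6 * q) / 5 else (2 - 7 * q) / (2 + 3 * q)) :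
    (1 - 6 * q) / 5 < 1 / 3 ∧ 1 / 3 < (2 - 7 * q) / (2 + 3 * q) ∧
      IsCantorval (cantorSet a - cantorSet a) := by
  subst haq
  have hq0 : (0:ℝ) < q := by linarith
  refine ⟨by linarith, ?_, ?_⟩
  · rw [lt_div_iff₀ (by linarith : (0:ℝ) < 2 + 3 * q)]
    linarith
  · have hC : IsCantorval (CC q) := by
      refine ⟨CC_perfect hq1 hq2, gaps_infinite hq1 hq2, ?_⟩
      intro G hG p hp
      obtain ⟨A, B, hOG, rfl⟩ := isGapOf_iff_OGap (CC_closed hq1 hq2) hG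
      obtain ⟨hQA, hQB⟩ := gap_Q hq1 hq2 hOG
      exact gap_endpoint_conditions hOG hQA hQB p hp
    exact hC

end CCS
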